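/- Let x₀, x_f ∈ ℝ², T > 0, γ ≠ 0, and let Γ(t) = x₀ + (t/T)(x_f − x₀) and y(t) = Γ(t) + γ Γ'(t)^⊥/|Γ'(t)|² for t ∈ [0,T], where x₀ ≠ x_f. Then Γ solves the ODE Γ'(t) = γ (Γ(t) − y(t))^⊥ / |Γ(t) − y(t)|² on [0,T], and for all t, |Γ(t) − y(t)| = γT/|x_f − x₀| (taking γ > 0) and |y(t) − y(0)| ≤ |x_f − x₀|. -/

import Mathlib

noncomputable section

abbrev E2 := EuclideanSpace ℝ (Fin 2)

/-- Rotation of a planar vector by π/2. -/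
def perp (w : E2) : E2 := (WithLp.equiv 2 (Fin 2 → ℝ)).symm ![-w 1, w 0]

lemma perp_apply0 (w : E2) : perp w 0 = -w 1 := rfl
lemma perp_apply1 (w : E2) : perp w 1 = w 0 := rfl

lemma norm_perp (w : E2) : ‖perp w‖ = ‖w‖ := by
  rw [EuclideanSpace.norm_eq, EuclideanSpace.norm_eq]
  simp [Fin.sum_univ_two, perp_apply0, perp_apply1, neg_sq]
  ring_nf

lemma perp_smul (c : ℝ) (w : E2) : perp (c • w) = c • perp w := by
  ext i
  fin_cases i <;>
    simp [perp_apply0, perp_apply1, mul_comm]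

lemma perp_perp (w : E2) : perp (perp w) = -w := by
  ext i
  fin_cases i <;> simp [perp_apply0, perp_apply1]

theorem stmt_8 (x₀ xf : E2) (hne : xf ≠ x₀) (T γ : ℝ) (hT : 0 < T) (hγ : 0 < γ)
    (Γ y : ℝ → E2)
    (hΓ : ∀ t, Γ t = x₀ + (t / T) • (xf - x₀))
    (hy : ∀ t, y t = Γ t + (γ / ‖(1 / T) • (xf - x₀)‖ ^ 2) • perp ((1 / T) • (xf - x₀))) :
    (∀ t ∈ Set.Icc (0 : ℝ) T,
      HasDerivAt Γ ((γ / ‖Γ t - y t‖ ^ 2) • perp (Γ t - y t)) t) ∧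
    (∀ t ∈ Set.Icc (0 : ℝ) T, ‖Γ t - y t‖ = γ * T / ‖xf - x₀‖) ∧
    (∀ t ∈ Set.Icc (0 : ℝ) T, ‖y t - y 0‖ ≤ ‖xf - x₀‖) := by
  set v : E2 := (1 / T) • (xf - x₀) with hv
  have hvne : xf - x₀ ≠ 0 := sub_ne_zero.mpr hne
  have hnv : ‖v‖ = ‖xf - x₀‖ / T := by
    rw [hv, norm_smul]
    simp [abs_of_pos hT, div_eq_mul_inv, mul_comm]
  have hxpos : (0:ℝ) < ‖xf - x₀‖ := norm_pos_iff.mpr hvne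
  have hnvpos : (0:ℝ) < ‖v‖ := by rw [hnv]; positivity
  have hdiff : ∀ t, Γ t - y t = -((γ / ‖v‖ ^ 2)) • perp v := by
    intro t
    rw [hy t]
    simp [neg_smul]
  have hnorm : ∀ t, ‖Γ t - y t‖ = γ * T / ‖xf - x₀‖ := by
    intro t
    have h1 : ‖Γ t - y t‖ = γ / ‖v‖ := by
      rw [hdiff t, norm_smul, norm_perp, Real.norm_eq_abs, abs_neg,
        abs_of_pos (div_pos hγ (pow_pos hnvpos 2))]
      field_simp
    rw [h1, hnv]
    field_simp
  refine ⟨?_, fun t _ => hnorm t, ?_⟩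
  · intro t _
    have hD : HasDerivAt Γ v t := by
      have h1 : HasDerivAt (fun t : ℝ => x₀ + (t / T) • (xf - x₀)) ((1 / T) • (xf - x₀)) t := by
        have := ((hasDerivAt_id t).div_const T).smul_const (xf - x₀)
        exact (this.const_add x₀)
      have : Γ = fun t : ℝ => x₀ + (t / T) • (xf - x₀) := funext hΓ
      rw [this]; exact h1
    have hpp : perp (Γ t - y t) = (γ / ‖v‖ ^ 2) • v := by
      rw [hdiff t, perp_smul, perp_perp]
      simp
    convert hD using 1
    rw [hpp, hnorm t, smul_smul]
    have hc : γ / (γ * T / ‖xf - x₀‖) ^ 2 * (γ / ‖v‖ ^ 2) = 1 := by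
      rw [hnv]; field_simp
    rw [hc, one_smul]
  · intro t ht
    have hyy : y t - y 0 = (t / T) • (xf - x₀) := by
      rw [hy t, hy 0, hΓ t, hΓ 0]
      simp
    rw [hyy, norm_smul, Real.norm_eq_abs, abs_of_nonneg (div_nonneg ht.1 hT.le)]
    have : t / T ≤ 1 := (div_le_one hT).mpr ht.2
    nlinarith [norm_nonneg (xf - x₀)]
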